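/- Let γ be the standard Gaussian measure on ℝ^n and S a measurable set with 0 < γ(S) < 1. Then ‖∫_S x dγ(x)‖ ≤ γ(S)·√(2 log(1/γ(S))). -/

import Mathlib

open MeasureTheory ProbabilityTheory Real
open scoped ENNReal NNReal RealInnerProductSpace

noncomputable def stdGaussian (n : ℕ) : Measure (EuclideanSpace ℝ (Fin n)) :=
  Measure.map (MeasurableEquiv.toLp 2 (Fin n → ℝ))
    (Measure.pi fun _ : Fin n => gaussianReal 0 1)

lemma gauss_pdf_mul (c x : ℝ) :
    rexp (c * x) * gaussianPDFReal 0 1 x = rexp (c ^ 2 / 2) * gaussianPDFReal c 1 x := by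
  simp only [gaussianPDFReal, NNReal.coe_one, mul_one, sub_zero]
  rw [mul_left_comm, mul_left_comm (rexp (c ^ 2 / 2)), ← Real.exp_add, ← Real.exp_add]
  congr 2
  ring

lemma gauss_density_eq : gaussianReal 0 1
    = MeasureTheory.volume.withDensity (fun x => ((gaussianPDFReal 0 1 x).toNNReal : ℝ≥0∞)) := by
  rw [gaussianReal_of_var_ne_zero 0 one_ne_zero]
  rfl

lemma smul_eq_pdf_mul (c : ℝ) : (fun x => ((gaussianPDFReal 0 1 x).toNNReal : ℝ≥0) • rexp (c * x))
    = fun x => rexp (c ^ 2 / 2) * gaussianPDFReal c 1 x := by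
  funext x
  rw [NNReal.smul_def, Real.coe_toNNReal _ (gaussianPDFReal_nonneg _ _ _), smul_eq_mul, mul_comm (gaussianPDFReal 0 1 x),
    gauss_pdf_mul]

lemma integrable_exp_gauss (c : ℝ) : Integrable (fun x => rexp (c * x)) (gaussianReal 0 1) := by
  rw [gauss_density_eq,
    integrable_withDensity_iff_integrable_smul ((measurable_gaussianPDFReal 0 1).real_toNNReal)]
  rw [smul_eq_pdf_mul]
  exact (integrable_gaussianPDFReal c 1).const_mul _

lemma integral_exp_gauss (c : ℝ) :
    ∫ x, rexp (c * x) ∂(gaussianReal 0 1) = rexp (c ^ 2 / 2) := by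
  rw [gauss_density_eq,
    integral_withDensity_eq_integral_smul ((measurable_gaussianPDFReal 0 1).real_toNNReal)]
  show ∫ x, ((gaussianPDFReal 0 1 x).toNNReal : ℝ≥0) • rexp (c * x) = _
  rw [smul_eq_pdf_mul, integral_const_mul, integral_gaussianPDFReal_eq_one c one_ne_zero, mul_one]

lemma integral_exp_pi (n : ℕ) (c : Fin n → ℝ) :
    (∫ x : Fin n → ℝ, rexp (∑ i, c i * x i) ∂(Measure.pi fun _ => gaussianReal 0 1))
      = rexp (∑ i, c i ^ 2 / 2) := by
  letI : MeasureSpace ℝ := ⟨gaussianReal 0 1⟩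
  haveI : SigmaFinite (volume : Measure ℝ) := inferInstanceAs (SigmaFinite (gaussianReal 0 1))
  have hvol : (Measure.pi fun _ : Fin n => gaussianReal 0 1) = (volume : Measure (Fin n → ℝ)) :=
    (volume_pi).symm
  rw [hvol]
  simp_rw [Real.exp_sum]
  rw [volume_pi, integral_fintype_prod_eq_prod (fun i (x : ℝ) => rexp (c i * x))]
  have : ∀ i, (∫ x : ℝ, rexp (c i * x)) = rexp (c i ^ 2 / 2) := fun i => integral_exp_gauss (c i)
  simp_rw [this]

lemma integrable_exp_pi (n : ℕ) (c : Fin n → ℝ) :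
    Integrable (fun x : Fin n → ℝ => rexp (∑ i, c i * x i))
      (Measure.pi fun _ => gaussianReal 0 1) := by
  letI : MeasureSpace ℝ := ⟨gaussianReal 0 1⟩
  haveI : SigmaFinite (volume : Measure ℝ) := inferInstanceAs (SigmaFinite (gaussianReal 0 1))
  have hvol : (Measure.pi fun _ : Fin n => gaussianReal 0 1) = (volume : Measure (Fin n → ℝ)) :=
    (volume_pi).symm
  rw [hvol]
  simp_rw [Real.exp_sum]
  exact Integrable.fintype_prod (f := fun i (x : ℝ) => rexp (c i * x))
    (fun i => integrable_exp_gauss (c i))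

lemma integrable_abs_gauss : Integrable (fun x : ℝ => |x|) (gaussianReal 0 1) := by
  have h := (integrable_exp_gauss 1).add (integrable_exp_gauss (-1))
  refine h.mono' (measurable_abs.aestronglyMeasurable) (ae_of_all _ fun x => ?_)
  rw [Real.norm_eq_abs, abs_abs]
  simp only [Pi.add_apply, one_mul, neg_one_mul]
  rcases abs_cases x with ⟨h1, _⟩ | ⟨h1, _⟩ <;> rw [h1] <;>
    nlinarith [Real.add_one_le_exp x, Real.add_one_le_exp (-x), Real.exp_pos x,
      Real.exp_pos (-x), Real.exp_pos (1 * x), Real.exp_pos (-1 * x),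
      Real.add_one_le_exp (1 * x), Real.add_one_le_exp (-1 * x)]

lemma integrable_coord_abs (n : ℕ) (i : Fin n) :
    Integrable (fun x : Fin n → ℝ => |x i|) (Measure.pi fun _ => gaussianReal 0 1) := by
  letI : MeasureSpace ℝ := ⟨gaussianReal 0 1⟩
  haveI : SigmaFinite (volume : Measure ℝ) := inferInstanceAs (SigmaFinite (gaussianReal 0 1))
  have hvol : (Measure.pi fun _ : Fin n => gaussianReal 0 1) = (volume : Measure (Fin n → ℝ)) :=
    (volume_pi).symm
  rw [hvol]
  set g : Fin n → ℝ → ℝ := fun j t => if j = i then |t| else 1 with hg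
  have : (fun x : Fin n → ℝ => |x i|) = fun x : Fin n → ℝ => ∏ j, g j (x j) := by
    funext x
    rw [Finset.prod_eq_single i (fun j _ hj => by simp [hg, hj]) (by simp)]
    simp [hg]
  rw [this]
  refine Integrable.fintype_prod (fun j => ?_)
  by_cases hj : j = i
  · have : g j = fun t : ℝ => |t| := by funext t; simp [hg, hj]
    rw [this]
    exact integrable_abs_gauss
  · have : g j = fun _ : ℝ => (1 : ℝ) := by funext t; simp [hg, hj]
    rw [this]
    haveI : IsProbabilityMeasure (volume : Measure ℝ) :=
      inferInstanceAs (IsProbabilityMeasure (gaussianReal 0 1))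
    haveI : IsProbabilityMeasure (volume : Measure (Fin n → ℝ)) := by
      rw [volume_pi]; infer_instance
    exact integrable_const 1

instance stdGaussian_prob (n : ℕ) : IsProbabilityMeasure (stdGaussian n) := by
  rw [_root_.stdGaussian]
  exact Measure.isProbabilityMeasure_map (MeasurableEquiv.measurable _).aemeasurable

lemma inner_symm_apply {n : ℕ} (w : EuclideanSpace ℝ (Fin n)) (x : Fin n → ℝ) :
    ⟪w, (MeasurableEquiv.toLp 2 (Fin n → ℝ)) x⟫ = ∑ i, w i * x i := by
  rw [PiLp.inner_apply]
  refine Finset.sum_congr rfl fun i _ => ?_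
  simp [MeasurableEquiv.toLp_apply, RCLike.inner_apply,
    PiLp.toLp_apply, mul_comm]

lemma norm_sq_eq_sum {n : ℕ} (w : EuclideanSpace ℝ (Fin n)) : ‖w‖ ^ 2 = ∑ i, w i ^ 2 := by
  rw [EuclideanSpace.norm_eq, Real.sq_sqrt (by positivity)]
  simp [Real.norm_eq_abs, sq_abs]

lemma integral_exp_inner {n : ℕ} (w : EuclideanSpace ℝ (Fin n)) :
    (∫ x, rexp ⟪w, x⟫ ∂(stdGaussian n)) = rexp (‖w‖ ^ 2 / 2) := by
  rw [_root_.stdGaussian, integral_map_equiv]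
  simp_rw [inner_symm_apply, integral_exp_pi n (fun i => w i), norm_sq_eq_sum,
    Finset.sum_div]

lemma integrable_exp_inner {n : ℕ} (w : EuclideanSpace ℝ (Fin n)) :
    Integrable (fun x => rexp ⟪w, x⟫) (stdGaussian n) := by
  rw [_root_.stdGaussian, integrable_map_equiv]
  have : ((fun x => rexp ⟪w, x⟫) ∘ (MeasurableEquiv.toLp 2 (Fin n → ℝ)))
      = fun x : Fin n → ℝ => rexp (∑ i, w i * x i) := by
    funext x
    rw [Function.comp_apply, inner_symm_apply]
  rw [this]
  exact integrable_exp_pi n _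

lemma integrable_id_stdGaussian {n : ℕ} :
    Integrable (fun x : EuclideanSpace ℝ (Fin n) => x) (stdGaussian n) := by
  rw [_root_.stdGaussian, integrable_map_equiv]
  have hbound : Integrable (fun x : Fin n → ℝ => ∑ i, |x i|)
      (Measure.pi fun _ => gaussianReal 0 1) :=
    integrable_finset_sum _ (fun i _ => integrable_coord_abs n i)
  refine hbound.mono' ((MeasurableEquiv.toLp 2 (Fin n → ℝ)).measurable.comp
    measurable_id).aestronglyMeasurable (ae_of_all _ fun x => ?_)
  have h1 : ‖((fun x : EuclideanSpace ℝ (Fin n) => x) ∘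
      (MeasurableEquiv.toLp 2 (Fin n → ℝ))) x‖
      = Real.sqrt (∑ i, |x i| ^ 2) := by
    rw [Function.comp_apply, EuclideanSpace.norm_eq]
    simp [MeasurableEquiv.toLp_apply, Real.norm_eq_abs]
  rw [h1]
  have h2 : ∑ i, |x i| ^ 2 ≤ (∑ i, |x i|) ^ 2 :=
    Finset.sum_sq_le_sq_sum_of_nonneg (fun i _ => abs_nonneg _)
  calc Real.sqrt (∑ i, |x i| ^ 2) ≤ Real.sqrt ((∑ i, |x i|) ^ 2) := Real.sqrt_le_sqrt h2
    _ = ∑ i, |x i| := Real.sqrt_sq (by positivity)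

/-- Gaussian level-1 inequality: `‖∫_S x dγ‖ ≤ γ(S)·√(2 log(1/γ(S)))`. -/
theorem stmt_13 (n : ℕ) (S : Set (EuclideanSpace ℝ (Fin n))) (hS : MeasurableSet S)
    (h0 : 0 < stdGaussian n S) (h1 : stdGaussian n S < 1) :
    ‖∫ x in S, x ∂(stdGaussian n)‖
      ≤ (stdGaussian n S).toReal *
        Real.sqrt (2 * Real.log (1 / (stdGaussian n S).toReal)) := by
  set γ := stdGaussian n with hγ
  set a := (γ S).toReal with ha
  have haS : γ S ≠ ⊤ := h1.trans ENNReal.one_lt_top |>.ne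
  have ha0 : 0 < a := ENNReal.toReal_pos h0.ne' haS
  have ha1 : a < 1 := by
    have := (ENNReal.toReal_lt_toReal haS ENNReal.one_ne_top).mpr h1
    simpa using this
  set L := Real.log (1 / a) with hLdef
  have hL : 0 < L := Real.log_pos (by rw [lt_div_iff₀ ha0]; linarith)
  set l := Real.sqrt (2 * L) with hldef
  have hl0 : 0 < l := Real.sqrt_pos.mpr (by linarith)
  have hl2 : l ^ 2 = 2 * L := Real.sq_sqrt (by linarith)
  have hexpL : rexp (-L) = a := by
    rw [hLdef, one_div, Real.log_inv, neg_neg, Real.exp_log ha0]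
  show ‖∫ x in S, x ∂γ‖ ≤ a * l
  by_cases hv : (∫ x in S, x ∂γ) = 0
  · rw [hv, norm_zero]; positivity
  set v := ∫ x in S, x ∂γ with hvdef
  set θ := ‖v‖⁻¹ • v with hθdef
  have hθ : ‖θ‖ = 1 := norm_smul_inv_norm hv
  have hid : Integrable (fun x : EuclideanSpace ℝ (Fin n) => x) γ := integrable_id_stdGaussian
  have hgInt : Integrable (fun x => ⟪θ, x⟫) γ := Integrable.const_inner (𝕜 := ℝ) θ hid
  have hnorm : ‖v‖ = ∫ x in S, ⟪θ, x⟫ ∂γ := by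
    have h := integral_inner (𝕜 := ℝ) (μ := γ.restrict S) hid.integrableOn θ
    rw [h, ← hvdef, hθdef, real_inner_smul_left, real_inner_self_eq_norm_sq, sq]
    rw [← mul_assoc, inv_mul_cancel₀ (norm_ne_zero_iff.mpr hv), one_mul]
  have hw_inner : ∀ x : EuclideanSpace ℝ (Fin n),
      ⟪(l • θ : EuclideanSpace ℝ (Fin n)), x⟫ = l * ⟪θ, x⟫ := fun x =>
    real_inner_smul_left θ x l
  have hw_norm : ‖(l • θ : EuclideanSpace ℝ (Fin n))‖ ^ 2 = l ^ 2 := by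
    rw [norm_smul, hθ, mul_one, Real.norm_eq_abs, sq_abs]
  have hexpInt : Integrable (fun x => rexp (l * ⟪θ, x⟫)) γ := by
    have := integrable_exp_inner (l • θ)
    simp_rw [hw_inner] at this
    exact this
  have hexpVal : (∫ x, rexp (l * ⟪θ, x⟫) ∂γ) = rexp (l ^ 2 / 2) := by
    have := integral_exp_inner (l • θ)
    rw [hw_norm] at this
    simp_rw [hw_inner] at this
    exact this
  set ψ : EuclideanSpace ℝ (Fin n) → ℝ :=
    fun x => rexp (l * ⟪θ, x⟫) / rexp (l ^ 2 / 2) with hψ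
  have hψInt : Integrable ψ γ := hexpInt.div_const _
  have hψVal : ∫ x, ψ x ∂γ = 1 := by
    rw [hψ, integral_div, hexpVal, div_self (Real.exp_ne_zero _)]
  have hψS : ∫ x in S, ψ x ∂γ ≤ 1 := by
    rw [← hψVal]
    exact setIntegral_le_integral hψInt (ae_of_all _ fun x => by positivity)
  have hpt : ∀ x, l * ⟪θ, x⟫ ≤ (L + l ^ 2 / 2 - 1) + a * ψ x := by
    intro x
    have h := Real.add_one_le_exp (l * ⟪θ, x⟫ - l ^ 2 / 2 - L)
    have h2 : a * ψ x = rexp (l * ⟪θ, x⟫ - l ^ 2 / 2 - L) := by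
      simp only [hψ]
      rw [← Real.exp_sub, ← hexpL, ← Real.exp_add]
      congr 1
      ring
    linarith [h, h2.ge, h2.le]
  have hconstInt : IntegrableOn (fun _ : EuclideanSpace ℝ (Fin n) => L + l ^ 2 / 2 - 1) S γ :=
    integrableOn_const haS
  have hmono : ∫ x in S, l * ⟪θ, x⟫ ∂γ
      ≤ ∫ x in S, ((L + l ^ 2 / 2 - 1) + a * ψ x) ∂γ := by
    refine integral_mono_ae ((hgInt.const_mul l).integrableOn) ?_ (ae_of_all _ hpt)
    exact hconstInt.add ((hψInt.integrableOn).const_mul a)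
  have hRHSval : ∫ x in S, ((L + l ^ 2 / 2 - 1) + a * ψ x) ∂γ
      = (L + l ^ 2 / 2 - 1) * a + a * ∫ x in S, ψ x ∂γ := by
    rw [integral_add hconstInt ((hψInt.integrableOn).const_mul a), setIntegral_const,
      integral_const_mul, smul_eq_mul, measureReal_def, ← ha, mul_comm a (L + l ^ 2 / 2 - 1)]
  have hIeq : ∫ x in S, l * ⟪θ, x⟫ ∂γ = l * ∫ x in S, ⟪θ, x⟫ ∂γ := integral_const_mul l _
  have hkey : l * ∫ x in S, ⟪θ, x⟫ ∂γ ≤ 2 * L * a := by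
    rw [← hIeq]
    have h3 : a * ∫ x in S, ψ x ∂γ ≤ a * 1 := by
      exact mul_le_mul_of_nonneg_left hψS ha0.le
    calc ∫ x in S, l * ⟪θ, x⟫ ∂γ ≤ (L + l ^ 2 / 2 - 1) * a + a * ∫ x in S, ψ x ∂γ := by
          rw [← hRHSval]; exact hmono
      _ ≤ (L + l ^ 2 / 2 - 1) * a + a * 1 := by linarith
      _ = 2 * L * a := by rw [hl2]; ring
  rw [hnorm]
  have heq : l * (a * l) = 2 * L * a := by nlinarith [hl2]
  exact (mul_le_mul_iff_right₀ hl0).mp (by linarith [hkey, heq])
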